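/- Let J = [[0,0,I_n],[0,I_r,0],[I_n,0,0]], let G ∈ Sym⁺_{2n+r}(ℝ) satisfy JGJ = G⁻¹, and write G = [[h, *, *],[G₂, *, *],[G₃, *, *]] in block columns. Define W = [[0],[0],[I_n]], U = [[G₃ - I_n],[G₂],[h]], Γ = WᵀU = h, and Δ = (UΓ⁻¹)ᵀ·(-J)·(UΓ⁻¹) where -J = -[[0,0,I_n],[0,I_r,0],[I_n,0,0]]. Then Δ = 2h⁻¹. In particular, the constraint from JGJ = G⁻¹ gives hG₃ + G₃ᵀh + G₂ᵀG₂ = 0. -/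

import Mathlib

open Matrix

/-- for `G ∈ Sym⁺_{2n+r}(ℝ)` with `JGJ = G⁻¹`, writing `h, G₂, G₃` for
the blocks of the first block column of `G`, setting `U = [[G₃ - I],[G₂],[h]]` and
`Δ = (U h⁻¹)ᵀ (-J) (U h⁻¹)`, one has `Δ = 2h⁻¹`; moreover the constraint gives
`hG₃ + G₃ᵀh + G₂ᵀG₂ = 0`. -/
theorem stmt13 (n r : ℕ)
    (J G : Matrix (Fin n ⊕ (Fin r ⊕ Fin n)) (Fin n ⊕ (Fin r ⊕ Fin n)) ℝ)
    (hJ : J = Matrix.fromBlocks 0 (Matrix.fromCols 0 1) (Matrix.fromRows 0 1)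
      (Matrix.fromBlocks 1 0 0 0))
    (hG : G.PosDef) (hGsymm : Gᵀ = G) (hGJ : J * G * J = G⁻¹)
    (h G₃ : Matrix (Fin n) (Fin n) ℝ) (G₂ : Matrix (Fin r) (Fin n) ℝ)
    (hhdef : h = Matrix.of fun i j => G (Sum.inl i) (Sum.inl j))
    (hG₂ : G₂ = Matrix.of fun i j => G (Sum.inr (Sum.inl i)) (Sum.inl j))
    (hG₃ : G₃ = Matrix.of fun i j => G (Sum.inr (Sum.inr i)) (Sum.inl j))
    (U : Matrix (Fin n ⊕ (Fin r ⊕ Fin n)) (Fin n) ℝ)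
    (hU : U = Matrix.fromRows (G₃ - 1) (Matrix.fromRows G₂ h)) :
    (U * h⁻¹)ᵀ * (-J) * (U * h⁻¹) = (2 : ℝ) • h⁻¹ ∧
      h * G₃ + G₃ᵀ * h + G₂ᵀ * G₂ = 0 := by
  -- symmetry of entries of `G`
  have hsym : ∀ a b, G a b = G b a := fun a b =>
    (Matrix.transpose_apply G b a).symm.trans (congrFun (congrFun hGsymm b) a)
  -- `h` is symmetric
  have hsymm : hᵀ = h := by
    ext i j
    simp only [hhdef, Matrix.transpose_apply, Matrix.of_apply]
    exact hsym _ _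
  -- `J * J = 1`
  have hJJ : J * J = 1 := by
    rw [hJ, Matrix.fromBlocks_multiply]
    simp only [Matrix.fromCols_mul_fromRows, Matrix.fromRows_mul_fromCols,
      Matrix.fromCols_mul_fromBlocks, Matrix.fromBlocks_mul_fromRows,
      Matrix.fromBlocks_multiply, Matrix.mul_zero, Matrix.zero_mul, Matrix.mul_one,
      Matrix.one_mul, add_zero, zero_add]
    ext (i|j|k) (i'|j'|k') <;> simp [Matrix.one_apply]
  -- `G * J * G = J`
  have hGJG : G * J * G = J := by
    have h1 : G * (J * G * J) = 1 := by
      rw [hGJ]; exact Matrix.mul_nonsing_inv G hG.det_pos.ne'.isUnit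
    have h2 : G * J * G * (J * J) = (G * (J * G * J)) * J := by
      simp only [Matrix.mul_assoc]
    rw [hJJ, Matrix.mul_one] at h2
    rw [h2, h1, Matrix.one_mul]
  -- the key constraint
  have key : h * G₃ + G₃ᵀ * h + G₂ᵀ * G₂ = 0 := by
    ext i j
    have e : (G * J * G) (Sum.inl i) (Sum.inl j) = J (Sum.inl i) (Sum.inl j) := by rw [hGJG]
    simp only [hJ, Matrix.mul_apply, Fintype.sum_sum_type, Matrix.fromBlocks_apply₁₁,
      Matrix.fromBlocks_apply₁₂, Matrix.fromBlocks_apply₂₁, Matrix.fromBlocks_apply₂₂,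
      Matrix.fromCols_apply_inl, Matrix.fromCols_apply_inr,
      Matrix.fromRows_apply_inl, Matrix.fromRows_apply_inr, Matrix.zero_apply,
      Matrix.one_apply, mul_zero, zero_mul, mul_ite, ite_mul, mul_one, one_mul,
      Finset.sum_ite_eq, Finset.sum_ite_eq', Finset.mem_univ, if_true, add_zero, zero_add,
      Finset.sum_const_zero] at e
    simp only [hhdef, hG₂, hG₃, Matrix.add_apply, Matrix.mul_apply, Matrix.transpose_apply,
      Matrix.zero_apply, Matrix.of_apply,
      show ∀ x, G (Sum.inr (Sum.inr x)) (Sum.inl i) = G (Sum.inl i) (Sum.inr (Sum.inr x)) from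
        fun x => hsym _ _,
      show ∀ x, G (Sum.inr (Sum.inl x)) (Sum.inl i) = G (Sum.inl i) (Sum.inr (Sum.inl x)) from
        fun x => hsym _ _]
    linear_combination e
  refine ⟨?_, key⟩
  -- the middle matrix: `Uᵀ * (-J) * U = 2 • h`
  have hM : Uᵀ * (-J) * U = (2 : ℝ) • h := by
    rw [hU, hJ, Matrix.transpose_fromRows, Matrix.transpose_fromRows, Matrix.mul_assoc]
    rw [show -(Matrix.fromBlocks 0 (Matrix.fromCols 0 1) (Matrix.fromRows 0 1)
        (Matrix.fromBlocks (1 : Matrix (Fin r) (Fin r) ℝ) 0 0 (0 : Matrix (Fin n) (Fin n) ℝ)))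
        = Matrix.fromBlocks 0 (Matrix.fromCols 0 (-1)) (Matrix.fromRows 0 (-1))
        (Matrix.fromBlocks (-1) 0 0 0) from by
      ext (_|_|_) (_|_|_) <;> simp]
    rw [Matrix.fromBlocks_mul_fromRows, Matrix.fromCols_mul_fromRows,
      Matrix.fromCols_mul_fromRows]
    simp only [Matrix.zero_mul, Matrix.neg_mul, Matrix.one_mul, zero_add, add_zero,
      Matrix.fromBlocks_mul_fromRows, Matrix.fromRows_mul]
    rw [show Matrix.fromRows (0 : Matrix (Fin r) (Fin n) ℝ) (-(G₃ - 1)) +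
        Matrix.fromRows (-G₂) (0 : Matrix (Fin n) (Fin n) ℝ)
        = Matrix.fromRows (-G₂) (-(G₃ - 1)) from by ext (_|_) _ <;> simp]
    rw [Matrix.fromCols_mul_fromRows, hsymm]
    have h2 : (2 : ℝ) • h = h + h := two_smul ℝ h
    rw [h2]
    have expand : (G₃ - 1)ᵀ * -h + (G₂ᵀ * -G₂ + h * -(G₃ - 1))
        = (h + h) - (h * G₃ + G₃ᵀ * h + G₂ᵀ * G₂) := by
      rw [Matrix.transpose_sub, Matrix.transpose_one]
      simp only [Matrix.mul_neg, Matrix.neg_mul]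
      noncomm_ring
    rw [expand, key, sub_zero]
  -- sandwich with `h⁻¹`
  by_cases hdet : IsUnit h.det
  · have hti : h⁻¹ᵀ = h⁻¹ := by rw [Matrix.transpose_nonsing_inv, hsymm]
    have hih : h⁻¹ * h = 1 := Matrix.nonsing_inv_mul h hdet
    calc (U * h⁻¹)ᵀ * (-J) * (U * h⁻¹)
        = h⁻¹ᵀ * (Uᵀ * (-J) * U) * h⁻¹ := by
          rw [Matrix.transpose_mul]
          simp only [Matrix.mul_assoc]
      _ = h⁻¹ * ((2 : ℝ) • h) * h⁻¹ := by rw [hti, hM]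
      _ = (2 : ℝ) • (h⁻¹ * h * h⁻¹) := by
          rw [Matrix.mul_smul, Matrix.smul_mul]
      _ = (2 : ℝ) • h⁻¹ := by rw [hih, Matrix.one_mul]
  · rw [Matrix.nonsing_inv_apply_not_isUnit h hdet]
    simp
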